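/- Let μ and ν be Borel probability measures on ℝ, each absolutely continuous with respect to Lebesgue measure with an almost-everywhere strictly positive density. If T₁, T₂ : ℝ → ℝ are monotone nondecreasing maps with Measure.map T₁ μ = ν and Measure.map T₂ μ = ν, then T₁ = T₂ μ-almost everywhere. -/

import Mathlib

open MeasureTheory Set

/-- **Uniqueness (up to null sets) of the monotone rearrangement on ℝ.**
If `μ, ν` are fully supported absolutely continuous Borel probability measures on `ℝ` and
`T₁, T₂` are monotone nondecreasing maps each pushing `μ` forward to `ν`, then `T₁ = T₂`
`μ`-almost everywhere. -/
theorem monotone_transport_unique_ae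
    (μ ν : Measure ℝ) [IsProbabilityMeasure μ] [IsProbabilityMeasure ν]
    (f g : ℝ → ℝ) (hfmeas : Measurable f) (hgmeas : Measurable g)
    (hμd : μ = (volume : Measure ℝ).withDensity (fun t => ENNReal.ofReal (f t)))
    (hνd : ν = (volume : Measure ℝ).withDensity (fun t => ENNReal.ofReal (g t)))
    (hfpos : ∀ᵐ t ∂(volume : Measure ℝ), 0 < f t)
    (hgpos : ∀ᵐ t ∂(volume : Measure ℝ), 0 < g t)
    (T₁ T₂ : ℝ → ℝ) (hT₁mono : Monotone T₁) (hT₂mono : Monotone T₂)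
    (hT₁ : Measure.map T₁ μ = ν) (hT₂ : Measure.map T₂ μ = ν) :
    T₁ =ᵐ[μ] T₂ := by
  -- μ and ν have no atoms
  haveI hμna : NullSingletonClass μ := ⟨fun a => by
    rw [hμd]; exact withDensity_absolutelyContinuous _ _ (measure_singleton a)⟩
  haveI hνna : NullSingletonClass ν := ⟨fun a => by
    rw [hνd]; exact withDensity_absolutelyContinuous _ _ (measure_singleton a)⟩
  -- ν gives positive measure to nonempty intervals
  have hνpos : ∀ a b : ℝ, a < b → ν (Ioc a b) ≠ 0 := by
    intro a b hab h0
    rw [hνd, withDensity_apply _ measurableSet_Ioc] at h0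
    rw [lintegral_eq_zero_iff hgmeas.ennreal_ofReal] at h0
    have h2 : ∀ᵐ t ∂((volume : Measure ℝ).restrict (Ioc a b)), 0 < g t :=
      ae_restrict_of_ae hgpos
    have h4 : ∀ᵐ t ∂((volume : Measure ℝ).restrict (Ioc a b)), False := by
      filter_upwards [h0, h2] with t h1 h2'
      have : g t ≤ 0 := by
        have := h1
        simp only [Pi.zero_apply, ENNReal.ofReal_eq_zero] at this
        exact this
      linarith
    rw [ae_iff] at h4
    simp only [not_false_iff, Measure.restrict_apply MeasurableSet.univ,
      Set.univ_inter] at h4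
    have : (volume : Measure ℝ) (Ioc a b) = 0 := by
      simpa using h4
    rw [Real.volume_Ioc] at this
    have : b - a ≤ 0 := by
      by_contra hc
      push_neg at hc
      exact (ENNReal.ofReal_pos.mpr hc).ne' this
    linarith
  -- key identity: for a monotone transport map, the CDFs match exactly
  have key : ∀ (T : ℝ → ℝ), Monotone T → Measure.map T μ = ν →
      ∀ x, ν (Iic (T x)) = μ (Iic x) := by
    intro T hmono hT x
    have hm : Measurable T := hmono.measurable
    have e1 : ν (Iic (T x)) = μ (T ⁻¹' Iic (T x)) := by
      rw [← hT, Measure.map_apply hm measurableSet_Iic]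
    have e2 : ν (Iio (T x)) = μ (T ⁻¹' Iio (T x)) := by
      rw [← hT, Measure.map_apply hm measurableSet_Iio]
    have s1 : Iic x ⊆ T ⁻¹' Iic (T x) := fun y hy => hmono hy
    have s2 : T ⁻¹' Iio (T x) ⊆ Iio x := by
      intro y hy
      by_contra hc
      simp only [Set.mem_Iio, not_lt] at hc
      exact absurd (hmono hc) (not_le.mpr hy)
    have hle1 : μ (Iic x) ≤ ν (Iic (T x)) := e1 ▸ measure_mono s1
    have hle2 : ν (Iic (T x)) ≤ μ (Iic x) := by
      have hν' : ν (Iic (T x)) = ν (Iio (T x)) :=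
        (measure_congr (Iio_ae_eq_Iic (a := T x) (μ := ν))).symm
      have hμ' : μ (Iio x) = μ (Iic x) :=
        measure_congr (Iio_ae_eq_Iic (a := x) (μ := μ))
      calc ν (Iic (T x)) = μ (T ⁻¹' Iio (T x)) := by rw [hν', e2]
        _ ≤ μ (Iio x) := measure_mono s2
        _ = μ (Iic x) := hμ'
    exact le_antisymm hle2 hle1
  -- conclude pointwise equality
  have hpt : ∀ x, T₁ x = T₂ x := by
    intro x
    have h12 : ν (Iic (T₁ x)) = ν (Iic (T₂ x)) := by
      rw [key T₁ hT₁mono hT₁ x, key T₂ hT₂mono hT₂ x]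
    have hgen : ∀ a b : ℝ, a < b → ν (Iic a) = ν (Iic b) → False := by
      intro a b hab heq
      have hsplit : ν (Iic a) + ν (Ioc a b) = ν (Iic b) := by
        rw [← measure_union (Set.Iic_disjoint_Ioc le_rfl) measurableSet_Ioc,
          Set.Iic_union_Ioc_eq_Iic hab.le]
      have : ν (Iic a) + ν (Ioc a b) = ν (Iic a) + 0 := by
        rw [add_zero, hsplit, heq]
      have h0 : ν (Ioc a b) = 0 :=
        (ENNReal.add_right_inj (measure_ne_top ν _)).mp this
      exact hνpos a b hab h0
    rcases lt_trichotomy (T₁ x) (T₂ x) with h | h | h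
    · exact absurd h12 (fun he => hgen _ _ h he)
    · exact h
    · exact absurd h12.symm (fun he => hgen _ _ h he)
  exact Filter.Eventually.of_forall hpt
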